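/- Let s be a rational number with s ≥ 1. Then [𝔟⁻[[t]]_s, 𝔫((t))_s] ∩ 𝔫((t)) ⊆ 𝔫[[t]] + (⨁_{α ∈ Φ⁺, ht(α) ≥ 2} 𝔤_α) ⊗ k((t)). -/

import Mathlib

open HahnSeries

section LoopAlgebra

variable (k : Type*) [Field k]
variable (g : Type*) [LieRing g] [LieAlgebra k g]

/-- `g` viewed as a (nonunital, nonassociative) ring with multiplication the Lie bracket;
this induces the natural multiplication on `HahnSeries ℤ g = 𝔤((t))` given by
`[a ⊗ f, b ⊗ g] = [a,b] ⊗ fg`. -/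
noncomputable instance lieRingAsRing : NonUnitalNonAssocRing g :=
  { (inferInstance : AddCommGroup g) with
    mul := fun a b => ⁅a, b⁆
    left_distrib := fun a b c => lie_add a b c
    right_distrib := fun a b c => add_lie a b c
    zero_mul := fun a => zero_lie a
    mul_zero := fun a => lie_zero a }

variable {Q : Type*} [AddCommGroup Q]

variable {k g}

/-- The Moy–Prasad subspace `𝔨_{x,r}` of the loop algebra `𝔤((t)) = HahnSeries ℤ 𝔤`:
those `v` each of whose `t^i`-coefficients lies in the span of the root spaces `G α`
with `x α + i ≥ r`. -/
noncomputable def MP (G : Q → Submodule k g) (x : Q →+ ℝ) (r : ℝ) :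
    Submodule k (HahnSeries ℤ g) where
  carrier := {v | ∀ i : ℤ, v.coeff i ∈ ⨆ α ∈ {α : Q | r ≤ x α + i}, G α}
  zero_mem' := by intro i; simp
  add_mem' := by
    intro a b ha hb i
    rw [HahnSeries.coeff_add]
    exact add_mem (ha i) (hb i)
  smul_mem' := by
    intro c a ha i
    rw [HahnSeries.coeff_smul]
    exact Submodule.smul_mem _ _ (ha i)

/-- The Moy–Prasad subspace `𝔨_{x,r+}`, with strict inequality. -/
noncomputable def MPplus (G : Q → Submodule k g) (x : Q →+ ℝ) (r : ℝ) :
    Submodule k (HahnSeries ℤ g) where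
  carrier := {v | ∀ i : ℤ, v.coeff i ∈ ⨆ α ∈ {α : Q | r < x α + i}, G α}
  zero_mem' := by intro i; simp
  add_mem' := by
    intro a b ha hb i
    rw [HahnSeries.coeff_add]
    exact add_mem (ha i) (hb i)
  smul_mem' := by
    intro c a ha i
    rw [HahnSeries.coeff_smul]
    exact Submodule.smul_mem _ _ (ha i)

end LoopAlgebra

section Whittaker

variable {k : Type*} [Field k] {g : Type*} [LieRing g] [LieAlgebra k g]
variable {Q : Type*} [AddCommGroup Q]

/-- The subspace of `𝔤((t)) = HahnSeries ℤ 𝔤` of series whose `t^i`-coefficient lies in the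
prescribed subspace `S i` of `𝔤`, for every `i`. -/
noncomputable def coeffSub (S : ℤ → Submodule k g) : Submodule k (HahnSeries ℤ g) where
  carrier := {v | ∀ i : ℤ, v.coeff i ∈ S i}
  zero_mem' := by intro i; simp
  add_mem' := by
    intro a b ha hb i
    rw [HahnSeries.coeff_add]; exact add_mem (ha i) (hb i)
  smul_mem' := by
    intro c a ha i
    rw [HahnSeries.coeff_smul]; exact Submodule.smul_mem _ _ (ha i)

/-- `𝔫 = ⨁_{α ∈ Φ⁺} 𝔤_α` as a subspace of `𝔤`. -/
noncomputable def nilpos (G : Q → Submodule k g) (Φplus : Finset Q) : Submodule k g :=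
  ⨆ α ∈ Φplus, G α

/-- `𝔟⁻ = 𝔥 ⊕ ⨁_{α ∈ −Φ⁺} 𝔤_α` as a subspace of `𝔤` (here `𝔥 = G 0`). -/
noncomputable def borelminus (G : Q → Submodule k g) (Φplus : Finset Q) : Submodule k g :=
  G 0 ⊔ ⨆ α ∈ Φplus, G (-α)

/-- `𝔫((t))` inside `HahnSeries ℤ 𝔤`. -/
noncomputable def nLoop (G : Q → Submodule k g) (Φplus : Finset Q) :
    Submodule k (HahnSeries ℤ g) :=
  coeffSub fun _ => nilpos G Φplus

/-- `𝔫[[t]]` inside `HahnSeries ℤ 𝔤`. -/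
noncomputable def nInt (G : Q → Submodule k g) (Φplus : Finset Q) :
    Submodule k (HahnSeries ℤ g) :=
  coeffSub fun i => if i < 0 then ⊥ else nilpos G Φplus

/-- `𝔟⁻[[t]]` inside `HahnSeries ℤ 𝔤`. -/
noncomputable def bInt (G : Q → Submodule k g) (Φplus : Finset Q) :
    Submodule k (HahnSeries ℤ g) :=
  coeffSub fun i => if i < 0 then ⊥ else borelminus G Φplus

/-- The additive map `α ↦ s · ht(α) : Q → ℝ`. -/
noncomputable def sht (ht : Q →+ ℤ) (s : ℚ) : Q →+ ℝ where
  toFun α := (s : ℝ) * (ht α : ℝ)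
  map_zero' := by simp
  map_add' a b := by push_cast [map_add]; ring

/-- `𝔟⁻[[t]]_s = 𝔨_{s·ht,(s−1)+} ∩ 𝔟⁻[[t]]`. -/
noncomputable def bIntS (G : Q → Submodule k g) (Φplus : Finset Q) (ht : Q →+ ℤ) (s : ℚ) :
    Submodule k (HahnSeries ℤ g) :=
  MPplus G (sht ht s) ((s : ℝ) - 1) ⊓ bInt G Φplus

/-- `𝔫((t))_s = 𝔨_{s·ht,0} ∩ 𝔫((t))`. -/
noncomputable def nLoopS (G : Q → Submodule k g) (Φplus : Finset Q) (ht : Q →+ ℤ) (s : ℚ) :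
    Submodule k (HahnSeries ℤ g) :=
  MP G (sht ht s) 0 ⊓ nLoop G Φplus

end Whittaker


section Aux

variable {k : Type*} [Field k] {g : Type*} [LieRing g] [LieAlgebra k g]
variable {Q : Type*} [AddCommGroup Q]

lemma mem_MPplus_iff {G : Q → Submodule k g} {x : Q →+ ℝ} {r : ℝ} {v : HahnSeries ℤ g} :
    v ∈ MPplus G x r ↔ ∀ i : ℤ, v.coeff i ∈ ⨆ α ∈ {α : Q | r < x α + i}, G α := Iff.rfl

lemma mem_MP_iff {G : Q → Submodule k g} {x : Q →+ ℝ} {r : ℝ} {v : HahnSeries ℤ g} :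
    v ∈ MP G x r ↔ ∀ i : ℤ, v.coeff i ∈ ⨆ α ∈ {α : Q | r ≤ x α + i}, G α := Iff.rfl

lemma mem_coeffSub_iff {S : ℤ → Submodule k g} {v : HahnSeries ℤ g} :
    v ∈ coeffSub S ↔ ∀ i : ℤ, v.coeff i ∈ S i := Iff.rfl

lemma bracket_iSup_mem (G : Q → Submodule k g)
    (hbr : ∀ (α β : Q) (a b : g), a ∈ G α → b ∈ G β → ⁅a, b⁆ ∈ G (α + β))
    {S T U : Set Q} (hST : ∀ μ ∈ S, ∀ β ∈ T, μ + β ∈ U)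
    {a b : g} (ha : a ∈ ⨆ μ ∈ S, G μ) (hb : b ∈ ⨆ β ∈ T, G β) :
    ⁅a, b⁆ ∈ ⨆ γ ∈ U, G γ := by
  classical
  refine Submodule.iSup_induction _ (motive := fun a => ⁅a, b⁆ ∈ ⨆ γ ∈ U, G γ) ha ?_
    (by simp) ?_
  · intro μ x hx
    by_cases hμ : μ ∈ S
    · rw [iSup_pos hμ] at hx
      refine Submodule.iSup_induction _ (motive := fun b => ⁅x, b⁆ ∈ ⨆ γ ∈ U, G γ) hb ?_
        (by simp) ?_
      · intro β y hy
        by_cases hβ : β ∈ T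
        · rw [iSup_pos hβ] at hy
          exact Submodule.mem_iSup_of_mem (μ + β)
            (by rw [iSup_pos (hST μ hμ β hβ)]; exact hbr μ β x y hx hy)
        · rw [iSup_neg hβ] at hy
          rw [(Submodule.mem_bot k).mp hy]
          simp
      · intro y z hy hz
        rw [lie_add]
        exact add_mem hy hz
    · rw [iSup_neg hμ] at hx
      rw [(Submodule.mem_bot k).mp hx]
      simp
  · intro x y hx hy
    rw [add_lie]
    exact add_mem hx hy

/-- Coefficientwise splitting: if every coefficient of `v` lies in `B i ⊔ C i`, then
`v ∈ coeffSub B ⊔ coeffSub C`. -/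
lemma coeffSub_split {B C : ℤ → Submodule k g} {v : HahnSeries ℤ g}
    (hv : ∀ i : ℤ, v.coeff i ∈ B i ⊔ C i) :
    v ∈ coeffSub B ⊔ coeffSub C := by
  classical
  have hchoose : ∀ i : ℤ, ∃ y : g, y ∈ B i ∧ v.coeff i - y ∈ C i ∧ (v.coeff i = 0 → y = 0) := by
    intro i
    by_cases h0 : v.coeff i = 0
    · exact ⟨0, zero_mem _, by simp [h0], fun _ => rfl⟩
    · obtain ⟨y, hy, z, hz, hyz⟩ := Submodule.mem_sup.mp (hv i)
      refine ⟨y, hy, ?_, fun h => absurd h h0⟩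
      rw [← hyz, add_sub_cancel_left]
      exact hz
  choose y hyB hyC hy0 using hchoose
  have hsupp : Function.support y ⊆ Function.support v.coeff := by
    intro i hi
    simp only [Function.mem_support] at hi ⊢
    intro h
    exact hi (hy0 i h)
  set Y : HahnSeries ℤ g := ⟨y, v.isPWO_support'.mono hsupp⟩ with hYdef
  have hYcoeff : ∀ i, Y.coeff i = y i := fun _ => rfl
  refine Submodule.mem_sup.mpr ⟨Y, ?_, v - Y, ?_, by abel⟩
  · intro i
    rw [hYcoeff]
    exact hyB i
  · intro i
    rw [HahnSeries.coeff_sub, hYcoeff]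
    exact hyC i

end Aux

/-- For a rational `s ≥ 1`,
`[𝔟⁻[[t]]_s, 𝔫((t))_s] ∩ 𝔫((t)) ⊆ 𝔫[[t]] + (⨁_{α ∈ Φ⁺, ht(α) ≥ 2} 𝔤_α) ⊗ k((t))`
inside `𝔤((t)) = HahnSeries ℤ 𝔤`, where `[𝔟⁻[[t]]_s, 𝔫((t))_s]` is the span of the
brackets (= products `v * w`) of elements of the two subspaces. -/
theorem whittaker_character_extension_lie
    {k : Type*} [Field k] {g : Type*} [LieRing g] [LieAlgebra k g]
    {Q : Type*} [AddCommGroup Q] [DecidableEq Q]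
    (Φplus : Finset Q) (hΦplus : (0 : Q) ∉ Φplus)
    (Φ : Finset Q) (hΦ : ∀ α : Q, α ∈ Φ ↔ (α ∈ Φplus ∨ -α ∈ Φplus))
    (hdisj : ∀ α ∈ Φplus, -α ∉ Φplus)
    (G : Q → Submodule k g)
    (hsupp : ∀ α : Q, α ∉ Φ → α ≠ 0 → G α = ⊥)
    (hdec : DirectSum.IsInternal G)
    (hbr : ∀ (α β : Q) (a b : g), a ∈ G α → b ∈ G β → ⁅a, b⁆ ∈ G (α + β))
    (ht : Q →+ ℤ) (hht : ∀ α ∈ Φplus, 1 ≤ ht α)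
    (s : ℚ) (hs : 1 ≤ s) :
    Submodule.span k {u : HahnSeries ℤ g |
        ∃ v ∈ bIntS G Φplus ht s, ∃ w ∈ nLoopS G Φplus ht s, u = v * w} ⊓ nLoop G Φplus ≤
      nInt G Φplus ⊔ coeffSub (fun _ => ⨆ α ∈ Φplus, ⨆ _ : 2 ≤ ht α, G α) := by
  classical
  set C : Submodule k g := ⨆ α ∈ Φplus, ⨆ _ : 2 ≤ ht α, G α with hC
  have hs0 : (0 : ℝ) < (s : ℝ) := by
    have : (1 : ℝ) ≤ (s : ℝ) := by exact_mod_cast hs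
    linarith
  -- products land in MPplus at level s-1
  have hprod : ∀ u ∈ {u : HahnSeries ℤ g |
      ∃ v ∈ bIntS G Φplus ht s, ∃ w ∈ nLoopS G Φplus ht s, u = v * w},
      u ∈ MPplus G (sht ht s) ((s : ℝ) - 1) := by
    rintro u ⟨v, hv, w, hw, rfl⟩
    have hv1 : v ∈ MPplus G (sht ht s) ((s : ℝ) - 1) := hv.1
    have hw1 : w ∈ MP G (sht ht s) 0 := hw.1
    rw [mem_MPplus_iff]
    intro i
    rw [HahnSeries.coeff_mul]
    refine Submodule.sum_mem _ ?_
    rintro ⟨j, l⟩ hjl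
    obtain ⟨-, -, hsum⟩ := Finset.mem_addAntidiagonal.mp hjl
    have h1 := (mem_MPplus_iff.mp hv1) j
    have h2 := (mem_MP_iff.mp hw1) l
    show ⁅v.coeff j, w.coeff l⁆ ∈ _
    refine bracket_iSup_mem G hbr ?_ h1 h2
    intro μ hμ β hβ
    simp only [Set.mem_setOf_eq] at hμ hβ ⊢
    rw [map_add]
    have : ((i : ℤ) : ℝ) = ((j : ℤ) : ℝ) + ((l : ℤ) : ℝ) := by
      rw [← hsum]; push_cast; ring
    rw [this]
    linarith
  intro u hu
  obtain ⟨hspan, hn⟩ := hu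
  have hMP : u ∈ MPplus G (sht ht s) ((s : ℝ) - 1) :=
    Submodule.span_le.mpr hprod hspan
  -- key: for i < 0 the MPplus coefficient space lands in C
  have hkey : ∀ i : ℤ, i < 0 →
      (⨆ γ ∈ {γ : Q | (s : ℝ) - 1 < sht ht s γ + i}, G γ) ≤ C := by
    intro i hi
    refine iSup₂_le fun γ hγ => ?_
    simp only [Set.mem_setOf_eq, sht, AddMonoidHom.coe_mk, ZeroHom.coe_mk] at hγ
    have hi1' : i ≤ -1 := by omega
    have hi1 : ((i : ℤ) : ℝ) ≤ -1 := by exact_mod_cast hi1'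
    have h1 : (1 : ℝ) < (ht γ : ℝ) := by nlinarith
    have h1' : (1 : ℤ) < ht γ := by exact_mod_cast h1
    have h2 : 2 ≤ ht γ := by omega
    by_cases hγΦ : γ ∈ Φplus
    · exact le_iSup₂_of_le γ hγΦ (le_iSup_of_le h2 le_rfl)
    · have hne : γ ≠ 0 := by
        rintro rfl
        simp [map_zero] at h2
      have hnΦ : γ ∉ Φ := by
        intro hmem
        rcases (hΦ γ).mp hmem with h | h
        · exact hγΦ h
        · have := hht _ h
          rw [map_neg] at this
          omega
      rw [hsupp γ hnΦ hne]
      exact bot_le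
  have hcoeff : ∀ i : ℤ, u.coeff i ∈
      (if i < 0 then (⊥ : Submodule k g) else nilpos G Φplus) ⊔ C := by
    intro i
    by_cases hi : i < 0
    · rw [if_pos hi]
      exact Submodule.mem_sup_right (hkey i hi (hMP i))
    · rw [if_neg hi]
      exact Submodule.mem_sup_left (hn i)
  exact coeffSub_split hcoeff
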